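/- If X ~ stExp(λ, c, J−c) and U ~ stExp(λ, c, K−c) are independent, where λ ∈ ℝ, c < min{J/2, K/2} and J, K are finite reals, then F^{(J,K)}(X,U) has the same joint distribution as (X,U). -/
import Mathlib


open MeasureTheory

private lemma udkdv_mem_fwd (J K c x u : ℝ) (hJ : 2 * c < J) (hK : 2 * c < K)
    (h1 : c ≤ x) (h2 : x ≤ J - c) (h3 : c ≤ u) (h4 : u ≤ K - c) :
    (c ≤ u - max (x + u - J) 0 + max (x + u - K) 0 ∧
      u - max (x + u - J) 0 + max (x + u - K) 0 ≤ J - c) ∧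
    (c ≤ x - max (x + u - K) 0 + max (x + u - J) 0 ∧
      x - max (x + u - K) 0 + max (x + u - J) 0 ≤ K - c) := by
  rcases le_total (x + u) J with hxJ | hxJ <;> rcases le_total (x + u) K with hxK | hxK
  · rw [max_eq_right (by linarith : x + u - J ≤ 0), max_eq_right (by linarith : x + u - K ≤ 0)]
    exact ⟨⟨by linarith, by linarith⟩, by linarith, by linarith⟩
  · rw [max_eq_right (by linarith : x + u - J ≤ 0), max_eq_left (by linarith : (0:ℝ) ≤ x + u - K)]
    exact ⟨⟨by linarith, by linarith⟩, by linarith, by linarith⟩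
  · rw [max_eq_left (by linarith : (0:ℝ) ≤ x + u - J), max_eq_right (by linarith : x + u - K ≤ 0)]
    exact ⟨⟨by linarith, by linarith⟩, by linarith, by linarith⟩
  · rw [max_eq_left (by linarith : (0:ℝ) ≤ x + u - J), max_eq_left (by linarith : (0:ℝ) ≤ x + u - K)]
    exact ⟨⟨by linarith, by linarith⟩, by linarith, by linarith⟩

private lemma udkdv_mem_iff (J K c x u : ℝ) (hJ : 2 * c < J) (hK : 2 * c < K) :
    ((c ≤ x ∧ x ≤ J - c) ∧ (c ≤ u ∧ u ≤ K - c)) ↔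
    ((c ≤ u - max (x + u - J) 0 + max (x + u - K) 0 ∧
        u - max (x + u - J) 0 + max (x + u - K) 0 ≤ J - c) ∧
      (c ≤ x - max (x + u - K) 0 + max (x + u - J) 0 ∧
        x - max (x + u - K) 0 + max (x + u - J) 0 ≤ K - c)) := by
  constructor
  · rintro ⟨⟨h1, h2⟩, h3, h4⟩
    exact udkdv_mem_fwd J K c x u hJ hK h1 h2 h3 h4
  · rintro ⟨⟨h1, h2⟩, h3, h4⟩
    have H := udkdv_mem_fwd J K c
      (u - max (x + u - J) 0 + max (x + u - K) 0)
      (x - max (x + u - K) 0 + max (x + u - J) 0) hJ hK h1 h2 h3 h4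
    have hs : (u - max (x + u - J) 0 + max (x + u - K) 0) +
        (x - max (x + u - K) 0 + max (x + u - J) 0) = x + u := by ring
    rw [hs] at H
    have e1 : (x - max (x + u - K) 0 + max (x + u - J) 0) - max (x + u - J) 0 +
        max (x + u - K) 0 = x := by ring
    have e2 : (u - max (x + u - J) 0 + max (x + u - K) 0) - max (x + u - K) 0 +
        max (x + u - J) 0 = u := by ring
    rw [e1, e2] at H
    exact H

theorem udKdV_stExp_detailed_balance (J K lam c : ℝ)
    (hc : c < min (J / 2) (K / 2))
    (μ ν : Measure ℝ) [IsProbabilityMeasure μ] [IsProbabilityMeasure ν]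
    (Z₁ Z₂ : ℝ) (hZ₁ : 0 < Z₁) (hZ₂ : 0 < Z₂)
    (hμ : μ = volume.withDensity fun x =>
      ENNReal.ofReal (if x ∈ Set.Icc c (J - c) then Z₁ * Real.exp (-lam * x) else 0))
    (hν : ν = volume.withDensity fun x =>
      ENNReal.ofReal (if x ∈ Set.Icc c (K - c) then Z₂ * Real.exp (-lam * x) else 0))
    (F : ℝ × ℝ → ℝ × ℝ)
    (hF : ∀ x u : ℝ, F (x, u) =
      (u - max (x + u - J) 0 + max (x + u - K) 0,
       x - max (x + u - K) 0 + max (x + u - J) 0)) :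
    Measure.map F (μ.prod ν) = μ.prod ν := by
  have hJ : 2 * c < J := by
    have := lt_min_iff.mp hc; linarith [this.1]
  have hK : 2 * c < K := by
    have := lt_min_iff.mp hc; linarith [this.2]
  -- densities
  set f : ℝ → ENNReal := fun x =>
    ENNReal.ofReal (if x ∈ Set.Icc c (J - c) then Z₁ * Real.exp (-lam * x) else 0) with hf
  set g : ℝ → ENNReal := fun x =>
    ENNReal.ofReal (if x ∈ Set.Icc c (K - c) then Z₂ * Real.exp (-lam * x) else 0) with hg
  have hfm : Measurable f := by
    apply Measurable.ennreal_ofReal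
    exact Measurable.ite measurableSet_Icc (by fun_prop) measurable_const
  have hgm : Measurable g := by
    apply Measurable.ennreal_ofReal
    exact Measurable.ite measurableSet_Icc (by fun_prop) measurable_const
  set ρ : ℝ × ℝ → ENNReal := fun p => f p.1 * g p.2 with hρ
  have hρm : Measurable ρ := (hfm.comp measurable_fst).mul (hgm.comp measurable_snd)
  -- product measure as withDensity over plane Lebesgue
  set N : Measure (ℝ × ℝ) := (volume : Measure ℝ).prod volume with hN
  have hprod : μ.prod ν = N.withDensity ρ := by
    refine Measure.prod_eq (μ := μ) (ν := ν) fun s t hs ht => ?_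
    rw [withDensity_apply _ (hs.prod ht), ← Measure.prod_restrict,
      lintegral_prod_mul (μ := volume.restrict s) (ν := volume.restrict t)
        hfm.aemeasurable hgm.aemeasurable,
      hμ, hν, withDensity_apply _ hs, withDensity_apply _ ht]
  -- F is measure preserving for N
  have hFeq : F = (fun z : ℝ × ℝ => (z.1 - z.2, z.2)) ∘
      (fun z : ℝ × ℝ => (z.1, z.1 + max (z.1 - J) 0 - max (z.1 - K) 0 - z.2)) ∘
      (fun z : ℝ × ℝ => (z.1 + z.2, z.2)) := by
    funext p
    obtain ⟨x, u⟩ := p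
    rw [hF]
    simp only [Function.comp_apply]
    exact Prod.ext (by ring) (by ring)
  have hmid : MeasurePreserving
      (fun z : ℝ × ℝ => (z.1, z.1 + max (z.1 - J) 0 - max (z.1 - K) 0 - z.2)) N N := by
    exact MeasurePreserving.skew_product
      (g := fun a y => a + max (a - J) 0 - max (a - K) 0 - y)
      (MeasurePreserving.id volume) (by fun_prop)
      (Filter.Eventually.of_forall fun a =>
        Measure.map_sub_left_eq_self volume (a + max (a - J) 0 - max (a - K) 0))
  have hFP : MeasurePreserving F N N := by
    rw [hFeq]
    exact ((measurePreserving_sub_prod volume volume).comp hmid).comp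
      (measurePreserving_add_prod volume volume)
  -- invariance of the density
  have hρF : ∀ p : ℝ × ℝ, ρ (F p) = ρ p := by
    rintro ⟨x, u⟩
    rw [hF]
    simp only [hρ, hf, hg, Set.mem_Icc]
    by_cases hin : (c ≤ x ∧ x ≤ J - c) ∧ (c ≤ u ∧ u ≤ K - c)
    · have hin' := (udkdv_mem_iff J K c x u hJ hK).mp hin
      rw [if_pos hin.1, if_pos hin.2, if_pos hin'.1, if_pos hin'.2]
      rw [← ENNReal.ofReal_mul (by positivity), ← ENNReal.ofReal_mul (by positivity)]
      congr 1
      rw [mul_mul_mul_comm, mul_mul_mul_comm Z₁ _ Z₂, ← Real.exp_add, ← Real.exp_add]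
      congr 2
      ring
    · have hin' : ¬ ((c ≤ u - max (x + u - J) 0 + max (x + u - K) 0 ∧
          u - max (x + u - J) 0 + max (x + u - K) 0 ≤ J - c) ∧
          (c ≤ x - max (x + u - K) 0 + max (x + u - J) 0 ∧
          x - max (x + u - K) 0 + max (x + u - J) 0 ≤ K - c)) := by
        intro h; exact hin ((udkdv_mem_iff J K c x u hJ hK).mpr h)
      rcases not_and_or.mp hin with h | h
      · rcases not_and_or.mp hin' with h' | h'
        · rw [if_neg h, if_neg h']; simp
        · rw [if_neg h, if_neg h']; simp
      · rcases not_and_or.mp hin' with h' | h'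
        · rw [if_neg h, if_neg h']; simp
        · rw [if_neg h, if_neg h']; simp
  -- conclude
  rw [hprod]
  ext s hs
  rw [Measure.map_apply hFP.measurable hs, withDensity_apply _ (hFP.measurable hs),
    withDensity_apply _ hs, ← lintegral_indicator (hFP.measurable hs) ρ,
    ← lintegral_indicator hs ρ]
  have : ∀ p, (F ⁻¹' s).indicator ρ p = s.indicator ρ (F p) := by
    intro p
    by_cases hp : p ∈ F ⁻¹' s
    · rw [Set.indicator_of_mem hp, Set.indicator_of_mem (Set.mem_preimage.mp hp), hρF]
    · rw [Set.indicator_of_notMem hp,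
        Set.indicator_of_notMem (fun h => hp (Set.mem_preimage.mpr h))]
  calc ∫⁻ p, (F ⁻¹' s).indicator ρ p ∂N
      = ∫⁻ p, s.indicator ρ (F p) ∂N := by simp_rw [this]
    _ = ∫⁻ p, s.indicator ρ p ∂N := hFP.lintegral_comp (hρm.indicator hs)
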